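/- There exists a unique q ∈ ℝ with B(−104/75, q) = 0, while there is no s ∈ ℝ with s² − 1 = −104/75; hence the real zero set of B contains exactly one point with first coordinate −104/75, and that point does not lie on the curve parametrized by s ↦ (s² − 1, −75s⁵ + (345/4)s⁴ − 29s³ + (117/2)s² − 163/4). -/
import Mathlib


/-- `B(p,q) = (q − (345/4)p² − 231p − 104)² − (p + 1)³(75p + 104)²`. -/
noncomputable def B (p q : ℝ) : ℝ :=
  (q - (345 / 4) * p ^ 2 - 231 * p - 104) ^ 2 - (p + 1) ^ 3 * (75 * p + 104) ^ 2

/-- The polynomial parametrization of the asymptotic variety of the Pinchuk map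
of degree 25. -/
noncomputable def pinchukCurve (s : ℝ) : ℝ × ℝ :=
  (s ^ 2 - 1, -75 * s ^ 5 + (345 / 4) * s ^ 4 - 29 * s ^ 3 + (117 / 2) * s ^ 2 - 163 / 4)

lemma B_at : ∀ q : ℝ, B (-104 / 75) q = (q - -18928 / 375) ^ 2 := by
  intro q
  unfold B
  ring

lemma no_s : ¬ ∃ s : ℝ, s ^ 2 - 1 = -104 / 75 := by
  rintro ⟨s, hs⟩
  nlinarith [sq_nonneg s]

theorem zariski_extra_point :
    (∃! q : ℝ, B (-104 / 75) q = 0) ∧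
    (¬ ∃ s : ℝ, s ^ 2 - 1 = -104 / 75) ∧
    (∀ q : ℝ, B (-104 / 75) q = 0 → (-104 / 75, q) ∉ Set.range pinchukCurve) := by
  refine ⟨⟨-18928 / 375, ?_, ?_⟩, no_s, ?_⟩
  · show B (-104/75) (-18928/375) = 0; rw [B_at]; norm_num
  · intro q hq
    rw [B_at] at hq
    have := sq_eq_zero_iff.mp hq
    linarith
  · rintro q - ⟨s, hs⟩
    exact no_s ⟨s, by simpa [pinchukCurve, Prod.ext_iff] using congrArg Prod.fst hs⟩
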